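/- If there exists any LPTS L consistent with finite sets 𝒫 of positive and 𝒩 of negative stochastic tree samples (i.e., P ⪯ L for all P ∈ 𝒫 and N ⪯̸ L for all N ∈ 𝒩), then the LPTS L_𝒫 obtained by merging the start states of all trees in 𝒫 is also consistent with 𝒫 and 𝒩. -/
import Mathlib


open Finset

/-- A discrete probability distribution on a finite set `S`, with rational values. -/
structure PDist (S : Type) [Fintype S] where
  prob : S → ℚ
  nonneg : ∀ s, 0 ≤ prob s
  sum_one : ∑ s, prob s = 1

/-- The lifting `μ₁ ⊑_R μ₂` of a relation `R` to distributions, via a weight function. -/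
def DistLe {S₁ S₂ : Type} [Fintype S₁] [Fintype S₂]
    (R : S₁ → S₂ → Prop) (μ₁ : PDist S₁) (μ₂ : PDist S₂) : Prop :=
  ∃ w : S₁ → S₂ → ℚ,
    (∀ s₁ s₂, 0 ≤ w s₁ s₂ ∧ w s₁ s₂ ≤ 1) ∧
    (∀ s₁, μ₁.prob s₁ = ∑ s₂, w s₁ s₂) ∧
    (∀ s₂, μ₂.prob s₂ = ∑ s₁, w s₁ s₂) ∧
    (∀ s₁ s₂, 0 < w s₁ s₂ → R s₁ s₂)

/-- A labeled probabilistic transition system over states `S` and actions `A`. -/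
structure LPTS (S A : Type) [Fintype S] where
  start : S
  trans : S → A → PDist S → Prop

/-- `R` is a strong simulation between `L₁` and `L₂`. -/
def IsStrongSim {S₁ S₂ A : Type} [Fintype S₁] [Fintype S₂]
    (L₁ : LPTS S₁ A) (L₂ : LPTS S₂ A) (R : S₁ → S₂ → Prop) : Prop :=
  ∀ s₁ s₂, R s₁ s₂ → ∀ a μ₁, L₁.trans s₁ a μ₁ →
    ∃ μ₂, L₂.trans s₂ a μ₂ ∧ DistLe R μ₁ μ₂

/-- `L₁ ⪯ L₂`: simulation conformance. -/
def Sim {S₁ S₂ A : Type} [Fintype S₁] [Fintype S₂]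
    (L₁ : LPTS S₁ A) (L₂ : LPTS S₂ A) : Prop :=
  ∃ R, IsStrongSim L₁ L₂ R ∧ R L₁.start L₂.start

/-- A stochastic tree: the start state is in the support of no distribution, and every
other state is in the support of exactly one distribution appearing in a transition. -/
def IsTree {S A : Type} [Fintype S] (L : LPTS S A) : Prop :=
  (∀ s a μ, L.trans s a μ → μ.prob L.start = 0) ∧
  (∀ t, t ≠ L.start → ∃! μ : PDist S, (∃ s a, L.trans s a μ) ∧ 0 < μ.prob t)

open scoped Classical

/-- `ν` is the copy of the distribution `μ` of tree `i` on the merged state space. -/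
def liftSum {ι : Type} {St : ι → Type} [Fintype ι] [∀ i, Fintype (St i)]
    (i : ι) (μ : PDist (St i)) (ν : PDist (Unit ⊕ Σ j, St j)) : Prop :=
  (∀ s' : St i, ν.prob (Sum.inr ⟨i, s'⟩) = μ.prob s') ∧
  (∀ x, (∀ s' : St i, x ≠ Sum.inr ⟨i, s'⟩) → ν.prob x = 0)

/-- The LPTS `L_𝒫` obtained by merging the start states of all trees in the family `P`:
the new start state inherits the transitions of every tree's start state, and all other
states keep their transitions. -/
def mergedLPTS {ι : Type} {St : ι → Type} [Fintype ι] [∀ i, Fintype (St i)] {A : Type}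
    (P : ∀ i, LPTS (St i) A) : LPTS (Unit ⊕ Σ j, St j) A where
  start := Sum.inl ()
  trans := fun x a ν => ∃ i s μ, (P i).trans s a μ ∧ liftSum i μ ν ∧
    ((x = Sum.inl () ∧ s = (P i).start) ∨ x = Sum.inr ⟨i, s⟩)

/-! ### Auxiliary lemmas -/

lemma prob_le_one {S : Type} [Fintype S] (μ : PDist S) (s : S) : μ.prob s ≤ 1 := by
  calc μ.prob s ≤ ∑ t, μ.prob t :=
        Finset.single_le_sum (fun t _ => μ.nonneg t) (Finset.mem_univ s)
    _ = 1 := μ.sum_one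

lemma pick_eq {ι : Type} {St : ι → Type} [Fintype ι] [∀ i, Fintype (St i)]
    (i : ι) (s₀ : St i) (f : St i → ℚ) :
    (∑ s : St i, if (Sum.inr ⟨i, s₀⟩ : Unit ⊕ Σ j, St j) = Sum.inr ⟨i, s⟩
      then f s else 0) = f s₀ := by
  classical
  have : ∀ s : St i,
      ((Sum.inr ⟨i, s₀⟩ : Unit ⊕ Σ j, St j) = Sum.inr ⟨i, s⟩) ↔ s = s₀ := by
    intro s
    constructor
    · intro h
      have h2 : (⟨i, s₀⟩ : Σ j, St j) = ⟨i, s⟩ := Sum.inr.injEq .. ▸ h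
      exact (Sigma.mk.inj_iff.mp h2).2.symm.eq.symm ▸ rfl
    · rintro rfl; rfl
  simp only [this]
  simp

lemma pick_ne {ι : Type} {St : ι → Type} [Fintype ι] [∀ i, Fintype (St i)]
    (i : ι) (x : Unit ⊕ Σ j, St j) (hx : ∀ s : St i, x ≠ Sum.inr ⟨i, s⟩)
    (f : St i → ℚ) :
    (∑ s : St i, if x = Sum.inr ⟨i, s⟩ then f s else 0) = 0 := by
  apply Finset.sum_eq_zero
  intro s _
  simp [hx s]

lemma distLe_comp {S₁ S₂ S₃ : Type} [Fintype S₁] [Fintype S₂] [Fintype S₃]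
    {R₁ : S₁ → S₂ → Prop} {R₂ : S₂ → S₃ → Prop}
    {μ₁ : PDist S₁} {μ₂ : PDist S₂} {μ₃ : PDist S₃}
    (h₁ : DistLe R₁ μ₁ μ₂) (h₂ : DistLe R₂ μ₂ μ₃) :
    DistLe (fun a c => ∃ b, R₁ a b ∧ R₂ b c) μ₁ μ₃ := by
  classical
  obtain ⟨w₁, hw₁b, hw₁r, hw₁c, hw₁R⟩ := h₁
  obtain ⟨w₂, hw₂b, hw₂r, hw₂c, hw₂R⟩ := h₂
  have hcol0 : ∀ s₂, μ₂.prob s₂ = 0 → ∀ s₁, w₁ s₁ s₂ = 0 := by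
    intro s₂ h0 s₁
    have hsum : ∑ t, w₁ t s₂ = 0 := by rw [← hw₁c, h0]
    exact (Finset.sum_eq_zero_iff_of_nonneg (fun t _ => (hw₁b t s₂).1)).mp hsum s₁
      (Finset.mem_univ s₁)
  have hrow0 : ∀ s₂, μ₂.prob s₂ = 0 → ∀ s₃, w₂ s₂ s₃ = 0 := by
    intro s₂ h0 s₃
    have hsum : ∑ t, w₂ s₂ t = 0 := by rw [← hw₂r, h0]
    exact (Finset.sum_eq_zero_iff_of_nonneg (fun t _ => (hw₂b s₂ t).1)).mp hsum s₃
      (Finset.mem_univ s₃)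
  have hw₂le : ∀ s₂ s₃, w₂ s₂ s₃ ≤ μ₂.prob s₂ := by
    intro s₂ s₃
    rw [hw₂r s₂]
    exact Finset.single_le_sum (fun t _ => (hw₂b s₂ t).1) (Finset.mem_univ s₃)
  set w : S₁ → S₃ → ℚ :=
    fun s₁ s₃ => ∑ s₂, if μ₂.prob s₂ = 0 then 0 else w₁ s₁ s₂ * w₂ s₂ s₃ / μ₂.prob s₂
    with hw
  have hterm_nonneg : ∀ s₁ s₂ s₃,
      0 ≤ (if μ₂.prob s₂ = 0 then 0 else w₁ s₁ s₂ * w₂ s₂ s₃ / μ₂.prob s₂) := by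
    intro s₁ s₂ s₃
    split
    · exact le_rfl
    · exact div_nonneg (mul_nonneg (hw₁b s₁ s₂).1 (hw₂b s₂ s₃).1) (μ₂.nonneg s₂)
  have hterm_le : ∀ s₁ s₂ s₃,
      (if μ₂.prob s₂ = 0 then 0 else w₁ s₁ s₂ * w₂ s₂ s₃ / μ₂.prob s₂) ≤ w₁ s₁ s₂ := by
    intro s₁ s₂ s₃
    split
    · exact (hw₁b s₁ s₂).1
    · next h =>
      have hpos : 0 < μ₂.prob s₂ := lt_of_le_of_ne (μ₂.nonneg s₂) (Ne.symm h)
      rw [div_le_iff₀ hpos]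
      calc w₁ s₁ s₂ * w₂ s₂ s₃ ≤ w₁ s₁ s₂ * μ₂.prob s₂ :=
            mul_le_mul_of_nonneg_left (hw₂le s₂ s₃) (hw₁b s₁ s₂).1
        _ = w₁ s₁ s₂ * μ₂.prob s₂ := rfl
  refine ⟨w, ?_, ?_, ?_, ?_⟩
  · intro s₁ s₃
    constructor
    · exact Finset.sum_nonneg fun s₂ _ => hterm_nonneg s₁ s₂ s₃
    · calc w s₁ s₃ ≤ ∑ s₂, w₁ s₁ s₂ :=
            Finset.sum_le_sum fun s₂ _ => hterm_le s₁ s₂ s₃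
        _ = μ₁.prob s₁ := (hw₁r s₁).symm
        _ ≤ 1 := prob_le_one μ₁ s₁
  · intro s₁
    rw [hw]
    rw [Finset.sum_comm]
    have : ∀ s₂ : S₂,
        (∑ s₃, if μ₂.prob s₂ = 0 then 0 else w₁ s₁ s₂ * w₂ s₂ s₃ / μ₂.prob s₂)
          = w₁ s₁ s₂ := by
      intro s₂
      by_cases h : μ₂.prob s₂ = 0
      · simp [h, hcol0 s₂ h s₁]
      · simp only [h, if_false]
        rw [← Finset.sum_div, ← Finset.mul_sum, ← hw₂r s₂, mul_div_assoc,
          div_self h, mul_one]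
    rw [Finset.sum_congr rfl fun s₂ _ => this s₂]
    exact hw₁r s₁
  · intro s₃
    rw [hw]
    rw [Finset.sum_comm]
    have : ∀ s₂ : S₂,
        (∑ s₁, if μ₂.prob s₂ = 0 then 0 else w₁ s₁ s₂ * w₂ s₂ s₃ / μ₂.prob s₂)
          = w₂ s₂ s₃ := by
      intro s₂
      by_cases h : μ₂.prob s₂ = 0
      · simp [h, hrow0 s₂ h s₃]
      · simp only [h, if_false]
        have : ∀ s₁, w₁ s₁ s₂ * w₂ s₂ s₃ / μ₂.prob s₂
            = w₁ s₁ s₂ * (w₂ s₂ s₃ / μ₂.prob s₂) := fun s₁ => by ring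
        rw [Finset.sum_congr rfl fun s₁ _ => this s₁, ← Finset.sum_mul, ← hw₁c s₂,
          mul_comm, div_mul_cancel₀ _ h]
    rw [Finset.sum_congr rfl fun s₂ _ => this s₂]
    exact hw₂c s₃
  · intro s₁ s₃ hpos
    have : ∃ s₂ ∈ Finset.univ,
        (if μ₂.prob s₂ = 0 then 0 else w₁ s₁ s₂ * w₂ s₂ s₃ / μ₂.prob s₂) ≠ 0 := by
      by_contra hcon
      push_neg at hcon
      have h0 : w s₁ s₃ = 0 := Finset.sum_eq_zero hcon
      rw [h0] at hpos
      exact lt_irrefl 0 hpos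
    obtain ⟨s₂, _, hne⟩ := this
    by_cases h : μ₂.prob s₂ = 0
    · simp [h] at hne
    · simp only [h, if_false] at hne
      have h1 : w₁ s₁ s₂ ≠ 0 := by
        intro h0; apply hne; rw [h0]; ring
      have h2 : w₂ s₂ s₃ ≠ 0 := by
        intro h0; apply hne; rw [h0]; ring
      exact ⟨s₂, hw₁R s₁ s₂ (lt_of_le_of_ne (hw₁b s₁ s₂).1 (Ne.symm h1)),
        hw₂R s₂ s₃ (lt_of_le_of_ne (hw₂b s₂ s₃).1 (Ne.symm h2))⟩

lemma sim_trans {S₁ S₂ S₃ A : Type} [Fintype S₁] [Fintype S₂] [Fintype S₃]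
    {L₁ : LPTS S₁ A} {L₂ : LPTS S₂ A} {L₃ : LPTS S₃ A}
    (h₁ : Sim L₁ L₂) (h₂ : Sim L₂ L₃) : Sim L₁ L₃ := by
  obtain ⟨R₁, hR₁, hs₁⟩ := h₁
  obtain ⟨R₂, hR₂, hs₂⟩ := h₂
  refine ⟨fun a c => ∃ b, R₁ a b ∧ R₂ b c, ?_, ⟨L₂.start, hs₁, hs₂⟩⟩
  rintro s₁ s₃ ⟨s₂, h12, h23⟩ a μ₁ htr
  obtain ⟨μ₂, htr₂, hle₁⟩ := hR₁ s₁ s₂ h12 a μ₁ htr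
  obtain ⟨μ₃, htr₃, hle₂⟩ := hR₂ s₂ s₃ h23 a μ₂ htr₂
  exact ⟨μ₃, htr₃, distLe_comp hle₁ hle₂⟩

/-- The canonical lift of a distribution on tree `i` to the merged state space. -/
noncomputable def liftDist {ι : Type} {St : ι → Type} [Fintype ι] [∀ i, Fintype (St i)]
    (i : ι) (μ : PDist (St i)) : PDist (Unit ⊕ Σ j, St j) where
  prob := fun x => ∑ s : St i, if x = Sum.inr ⟨i, s⟩ then μ.prob s else 0
  nonneg := fun x => Finset.sum_nonneg fun s _ => by
    split
    · exact μ.nonneg s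
    · exact le_rfl
  sum_one := by
    rw [Finset.sum_comm]
    have : ∀ s : St i,
        (∑ x : Unit ⊕ Σ j, St j, if x = Sum.inr ⟨i, s⟩ then μ.prob s else 0)
          = μ.prob s := by
      intro s
      rw [Finset.sum_ite_eq' Finset.univ (Sum.inr ⟨i, s⟩ : Unit ⊕ Σ j, St j)
        (fun _ => μ.prob s)]
      simp
    rw [Finset.sum_congr rfl fun s _ => this s]
    exact μ.sum_one

lemma liftSum_liftDist {ι : Type} {St : ι → Type} [Fintype ι] [∀ i, Fintype (St i)]
    (i : ι) (μ : PDist (St i)) : liftSum i μ (liftDist i μ) := by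
  constructor
  · intro s'
    exact pick_eq i s' μ.prob
  · intro x hx
    exact pick_ne i x hx μ.prob

lemma sim_into_merged {ι : Type} {St : ι → Type} [Fintype ι] [∀ i, Fintype (St i)]
    {A : Type} (P : ∀ i, LPTS (St i) A) (i : ι) : Sim (P i) (mergedLPTS P) := by
  classical
  refine ⟨fun s x => (s = (P i).start ∧ x = Sum.inl ()) ∨ x = Sum.inr ⟨i, s⟩,
    ?_, Or.inl ⟨rfl, rfl⟩⟩
  intro s x hR a μ htr
  refine ⟨liftDist i μ, ?_, ?_⟩
  · refine ⟨i, s, μ, htr, liftSum_liftDist i μ, ?_⟩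
    rcases hR with ⟨hs, hx⟩ | hx
    · exact Or.inl ⟨hx, hs⟩
    · exact Or.inr hx
  · refine ⟨fun s₁ x₁ => if x₁ = Sum.inr ⟨i, s₁⟩ then μ.prob s₁ else 0, ?_, ?_, ?_, ?_⟩
    · intro s₁ x₁
      beta_reduce
      constructor
      · split
        · exact μ.nonneg s₁
        · exact le_rfl
      · split
        · exact prob_le_one μ s₁
        · exact zero_le_one
    · intro s₁
      beta_reduce
      rw [Finset.sum_ite_eq' Finset.univ (Sum.inr ⟨i, s₁⟩ : Unit ⊕ Σ j, St j)
        (fun _ => μ.prob s₁)]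
      simp
    · intro x₁
      rfl
    · intro s₁ x₁ hpos
      beta_reduce at hpos
      right
      by_contra hne
      simp [hne] at hpos

lemma merged_sim {ι : Type} {St : ι → Type} [Fintype ι] [∀ i, Fintype (St i)]
    {A SL : Type} [Fintype SL] (P : ∀ i, LPTS (St i) A) (L : LPTS SL A)
    (hsim : ∀ i, Sim (P i) L) : Sim (mergedLPTS P) L := by
  classical
  choose R hR hRs using hsim
  refine ⟨fun x t => (x = Sum.inl () ∧ t = L.start) ∨
      ∃ (i : ι) (s : St i), x = Sum.inr ⟨i, s⟩ ∧ R i s t, ?_, Or.inl ⟨rfl, rfl⟩⟩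
  rintro x t hrel a ν htr
  obtain ⟨i, s, μ, htrP, hlift, hcase⟩ := htr
  -- establish R i s t
  have hRst : R i s t := by
    rcases hcase with ⟨hx, hs⟩ | hx
    · rcases hrel with ⟨_, ht⟩ | ⟨i', s', hx', _⟩
      · rw [hs, ht]; exact hRs i
      · rw [hx] at hx'; exact absurd hx' (by simp)
    · rcases hrel with ⟨hx', _⟩ | ⟨i', s', hx', hRst'⟩
      · rw [hx] at hx'; exact absurd hx' (by simp)
      · rw [hx] at hx'
        have h2 : (⟨i', s'⟩ : Σ j, St j) = ⟨i, s⟩ := (Sum.inr.injEq .. ▸ hx').symm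
        obtain ⟨rfl, h3⟩ := Sigma.mk.inj_iff.mp h2
        rw [← eq_of_heq h3]
        exact hRst'
  obtain ⟨μ₂, htr₂, hle⟩ := hR i s t hRst a μ htrP
  refine ⟨μ₂, htr₂, ?_⟩
  obtain ⟨w, hwb, hwr, hwc, hwR⟩ := hle
  refine ⟨fun x' t' => ∑ s' : St i, if x' = Sum.inr ⟨i, s'⟩ then w s' t' else 0,
    ?_, ?_, ?_, ?_⟩
  · intro x' t'
    beta_reduce
    by_cases hx' : ∃ s' : St i, x' = Sum.inr ⟨i, s'⟩
    · obtain ⟨s', rfl⟩ := hx'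
      rw [pick_eq i s' (fun s'' => w s'' t')]
      exact hwb s' t'
    · push_neg at hx'
      rw [pick_ne i x' hx' (fun s'' => w s'' t')]
      exact ⟨le_rfl, zero_le_one⟩
  · intro x'
    beta_reduce
    by_cases hx' : ∃ s' : St i, x' = Sum.inr ⟨i, s'⟩
    · obtain ⟨s', rfl⟩ := hx'
      rw [hlift.1 s', hwr s']
      exact Finset.sum_congr rfl fun t' _ => (pick_eq i s' (fun s'' => w s'' t')).symm
    · push_neg at hx'
      rw [hlift.2 x' hx']
      exact (Finset.sum_eq_zero fun t' _ => pick_ne i x' hx' (fun s'' => w s'' t')).symm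
  · intro t'
    beta_reduce
    rw [hwc t']
    rw [Finset.sum_comm]
    apply Finset.sum_congr rfl
    intro s' _
    rw [Finset.sum_ite_eq' Finset.univ (Sum.inr ⟨i, s'⟩ : Unit ⊕ Σ j, St j)
      (fun _ => w s' t')]
    simp
  · intro x' t' hpos
    beta_reduce at hpos
    have : ∃ s' ∈ Finset.univ, (if x' = Sum.inr (⟨i, s'⟩ : Σ j, St j) then w s' t' else 0) ≠ 0 := by
      by_contra hcon
      push_neg at hcon
      have h0 : (∑ s' : St i, if x' = Sum.inr ⟨i, s'⟩ then w s' t' else 0) = 0 :=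
        Finset.sum_eq_zero hcon
      rw [h0] at hpos
      exact lt_irrefl 0 hpos
    obtain ⟨s', _, hne⟩ := this
    by_cases hx' : x' = Sum.inr (⟨i, s'⟩ : Σ j, St j)
    · simp only [hx', if_true] at hne
      exact Or.inr ⟨i, s', hx',
        hwR s' t' (lt_of_le_of_ne (hwb s' t').1 (Ne.symm hne))⟩
    · simp [hx'] at hne

/-- If some LPTS is consistent with the positive trees `P` and negative trees `N`, then
the merged LPTS `L_𝒫` is consistent with them as well. -/
theorem merged_consistent {ι ιN : Type} [Fintype ι] [Nonempty ι] [Fintype ιN]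
    {St : ι → Type} [∀ i, Fintype (St i)] {StN : ιN → Type} [∀ j, Fintype (StN j)]
    {A : Type}
    (P : ∀ i, LPTS (St i) A) (htree : ∀ i, IsTree (P i))
    (N : ∀ j, LPTS (StN j) A) (htreeN : ∀ j, IsTree (N j))
    (hcons : ∃ (SL : Type) (_ : Fintype SL) (L : LPTS SL A),
      (∀ i, Sim (P i) L) ∧ (∀ j, ¬ Sim (N j) L)) :
    (∀ i, Sim (P i) (mergedLPTS P)) ∧ (∀ j, ¬ Sim (N j) (mergedLPTS P)) := by
  obtain ⟨SL, _, L, hP, hN⟩ := hcons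
  refine ⟨fun i => sim_into_merged P i, fun j hsim => hN j ?_⟩
  exact sim_trans hsim (merged_sim P L hP)
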